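/- In the algebra U^ȷ(sl₃), for every natural number n one has f·e^{(n+1)} = e^{(n)}·( f·e − v·e·f − [n]·(v^n·k + v^{-n}·k^{-1}) ) + v^{n+1}·e^{(n+1)}·f, where e^{(n)} = e^n/[n]! denotes the divided power. -/

import Mathlib

noncomputable def v : RatFunc ℚ := RatFunc.X

noncomputable def qint (m : ℤ) : RatFunc ℚ := (v ^ m - v ^ (-m)) / (v - v⁻¹)

noncomputable def qfact (n : ℕ) : RatFunc ℚ := ∏ i ∈ Finset.range n, qint (i + 1)

lemma v_ne : v ≠ 0 := RatFunc.X_ne_zero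

lemma X_pow_ne_one (m : ℕ) (hm : m ≠ 0) : v ^ m ≠ 1 := by
  intro h
  have h2 : algebraMap (Polynomial ℚ) (RatFunc ℚ) (Polynomial.X ^ m)
      = algebraMap (Polynomial ℚ) (RatFunc ℚ) 1 := by
    simpa [map_pow, RatFunc.algebraMap_X, v] using h
  have h3 := RatFunc.algebraMap_injective ℚ h2
  have := congrArg Polynomial.natDegree h3
  simp [Polynomial.natDegree_X_pow] at this
  exact hm this

lemma sub_inv_ne (m : ℕ) (hm : m ≠ 0) : v ^ m - (v ^ m)⁻¹ ≠ 0 := by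
  intro h
  have hv : v ^ m ≠ 0 := pow_ne_zero _ v_ne
  have h' : v ^ m * v ^ m = 1 := by field_simp at h; linear_combination h
  have : v ^ (m + m) = 1 := by rw [pow_add]; exact h'
  exact X_pow_ne_one (m + m) (by omega) this

lemma hvv : v - v⁻¹ ≠ 0 := by
  have := sub_inv_ne 1 one_ne_zero
  simpa using this

lemma qint_nat (n : ℕ) : qint n = (v ^ n - (v ^ n)⁻¹) / (v - v⁻¹) := by
  rw [qint, zpow_neg, zpow_natCast]

lemma qint_nat_ne (n : ℕ) (hn : n ≠ 0) : qint n ≠ 0 := by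
  rw [qint_nat]; exact div_ne_zero (sub_inv_ne n hn) hvv

lemma qfact_ne (n : ℕ) : qfact n ≠ 0 := by
  rw [qfact]
  apply Finset.prod_ne_zero_iff.mpr
  intro i _
  have h : ((i : ℤ) + 1) = ((i + 1 : ℕ) : ℤ) := by push_cast; ring
  rw [h]
  exact qint_nat_ne (i+1) (by omega)

lemma qfact_succ (n : ℕ) : qfact (n+1) = qfact n * qint (↑n + 1) :=
  Finset.prod_range_succ _ n

lemma hq (m : ℕ) : qint m * (v - v⁻¹) = v ^ m - (v⁻¹) ^ m := by
  rw [qint_nat, div_mul_cancel₀ _ hvv, inv_pow]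

lemma hvu : v * v⁻¹ = 1 := mul_inv_cancel₀ v_ne

lemma hab (n : ℕ) : v ^ n * (v⁻¹) ^ n = 1 := by
  rw [← mul_pow, hvu, one_pow]

lemma q2v : qint 2 = v + v⁻¹ := by
  apply mul_right_cancel₀ hvv
  have h3 := hq 2
  have h3' : qint 2 * (v - v⁻¹) = v^2 - (v⁻¹)^2 := by exact_mod_cast h3
  linear_combination h3'

lemma q0 : qint 0 = 0 := by simp [qint]

lemma q1 : qint 1 = 1 := by
  rw [qint]
  simp only [zpow_one, zpow_neg_one]
  exact div_self hvv

lemma qI1 (n : ℕ) : qint (↑n+1) * (qint 2 - v) + v^(n+1) = qint (↑n+2) := by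
  rw [q2v]
  apply mul_right_cancel₀ hvv
  have h1 := hq (n+1); have h2 := hq (n+2)
  push_cast at h1 h2
  linear_combination v⁻¹ * h1 - h2

lemma qI2 (n : ℕ) : -qint (↑n+1) = -(qint (↑n+2) * v) + v^(n+2) := by
  apply mul_right_cancel₀ hvv
  have h1 := hq (n+1); have h2 := hq (n+2)
  have hv := v_ne
  push_cast at h1 h2
  linear_combination -h1 + v * h2 + (v^(n+1) - v⁻¹^(n+1)) * hvu

lemma qL3 (n : ℕ) : qint 2 * v + qint ↑n * (v^n * v^3) = qint (↑n+2) * v^(n+1) := by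
  rw [q2v]
  apply mul_right_cancel₀ hvv
  have h0 := hq n; have h2 := hq (n+2)
  push_cast at h0 h2
  linear_combination (v^n * v^3) * h0 - v^(n+1) * h2 - (v^3 - v*(v⁻¹)^2) * hab n

lemma qL4 (n : ℕ) : qint 2 * v⁻¹ + qint ↑n * ((v⁻¹)^n * (v⁻¹)^3) = qint (↑n+2) * (v⁻¹)^(n+1) := by
  rw [q2v]
  apply mul_right_cancel₀ hvv
  have h0 := hq n; have h2 := hq (n+2)
  push_cast at h0 h2
  linear_combination ((v⁻¹)^n * (v⁻¹)^3) * h0 - (v⁻¹)^(n+1) * h2 - (v⁻¹*v^2 - (v⁻¹)^3) * hab n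


theorem aux_lemma
    (K : Type*) [Field K] (A : Type*) [Ring A] [Algebra K A]
    (w : K) (qi : ℤ → K) (qf : ℕ → K)
    (e f k k' : A)
    (hkk' : k * k' = 1) (hk'k : k' * k = 1)
    (hke : k * e = (w ^ 3) • (e * k))
    (hserre_e : e ^ 2 * f - qi 2 • (e * f * e) + f * e ^ 2
      = -(qi 2) • (e * (w • k + w⁻¹ • k')))
    (hw : w ≠ 0)
    (hq0 : qi 0 = 0) (hq1 : qi 1 = 1)
    (hI1 : ∀ n : ℕ, qi (↑n+1) * (qi 2 - w) + w^(n+1) = qi (↑n+2))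
    (hI2 : ∀ n : ℕ, -qi (↑n+1) = -(qi (↑n+2) * w) + w^(n+2))
    (hL3 : ∀ n : ℕ, qi 2 * w + qi ↑n * (w^n * w^3) = qi (↑n+2) * w^(n+1))
    (hL4 : ∀ n : ℕ, qi 2 * w⁻¹ + qi ↑n * ((w⁻¹)^n * (w⁻¹)^3) = qi (↑n+2) * (w⁻¹)^(n+1))
    (hqine : ∀ n : ℕ, qi (↑n+1) ≠ 0)
    (hqf : ∀ n, qf n ≠ 0)
    (hqfs : ∀ n, qf (n+1) = qf n * qi (↑n+1))
    (ep : ℕ → A) (hep : ∀ n, ep n = (qf n)⁻¹ • e ^ n) (n : ℕ) :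
    f * ep (n + 1)
      = ep n * (f * e - w • (e * f) - qi ↑n • (w^n • k + (w⁻¹)^n • k'))
        + w^(n+1) • (ep (n + 1) * f) := by
  have hk'e : k' * e = (w⁻¹)^3 • (e * k') := by
    have h1 : k' * (k * e) * k' = e * k' := by rw [← mul_assoc, hk'k, one_mul]
    have h2 : k' * (k * e) * k' = w^3 • (k' * e) := by
      rw [hke, mul_smul_comm, smul_mul_assoc]
      rw [← mul_assoc k' e k, mul_assoc (k' * e) k k', hkk', mul_one]
    have h3 : e * k' = w^3 • (k' * e) := h1 ▸ h2
    have h4 : (w⁻¹)^3 * w^3 = 1 := by rw [← mul_pow, inv_mul_cancel₀ hw, one_pow]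
    calc k' * e = ((w⁻¹)^3 * w^3) • (k' * e) := by rw [h4, one_smul]
    _ = (w⁻¹)^3 • (w^3 • (k' * e)) := mul_smul _ _ _
    _ = (w⁻¹)^3 • (e * k') := by rw [← h3]
  have hfe2 : f * (e * e)
      = qi 2 • (e * (f * e)) - e * (e * f)
        - qi 2 • (w • (e * k) + w⁻¹ • (e * k')) := by
    have h := hserre_e
    simp only [pow_two, mul_assoc, mul_add, smul_add, mul_smul_comm] at h ⊢
    linear_combination (norm := module) h
  have hpow : ∀ n : ℕ, f * e^(n+1)
      = qi (↑n+1) • (e^n * (f * e - w • (e * f)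
          - qi ↑n • (w^n • k + (w⁻¹)^n • k')))
        + w^(n+1) • (e^(n+1) * f) := by
    intro n
    induction n with
    | zero =>
      simp only [Nat.cast_zero, zero_add, hq0, hq1, zero_smul, sub_zero, pow_zero, pow_one,
        one_mul, one_smul]
      module
    | succ n ih =>
      have step1 : f * e^(n+1+1) = (f * e^(n+1)) * e := by rw [pow_succ, ← mul_assoc]
      rw [step1, ih]
      simp only [pow_succ, pow_zero, one_mul, mul_assoc, mul_add, add_mul, mul_sub, sub_mul,
        smul_add, smul_sub, smul_mul_assoc, mul_smul_comm, smul_smul]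
      rw [hfe2, hke, hk'e]
      simp only [pow_succ, pow_zero, one_mul, mul_assoc, mul_add, add_mul, mul_sub, sub_mul,
        smul_add, smul_sub, smul_mul_assoc, mul_smul_comm, smul_smul]
      push_cast
      simp only [show ((n:ℤ)+1+1) = (n:ℤ)+2 from by ring]
      match_scalars
      · linear_combination hI1 n
      · linear_combination hI2 n
      · linear_combination (-qi (↑n+1)) * hL3 n
      · linear_combination (-qi (↑n+1)) * hL4 n
  simp only [hep]
  simp only [mul_smul_comm, smul_mul_assoc]
  rw [hpow n]
  have hfs := hqf n
  have hfs1 := hqf (n+1)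
  have hqs := hqine n
  match_scalars
  all_goals simp only [hqfs]
  all_goals field_simp
  all_goals try ring

/-- Lemma `a`: in `U^ȷ(sl₃)` (any algebra with its defining relations),
`f e^{(n+1)} = e^{(n)} (fe - v ef - [n](vⁿ k + v⁻ⁿ k⁻¹)) + v^{n+1} e^{(n+1)} f`. -/
theorem lemma_a
    (A : Type*) [Ring A] [Algebra (RatFunc ℚ) A]
    (e f k k' : A)
    (hkk' : k * k' = 1) (hk'k : k' * k = 1)
    (hke : k * e = (v ^ 3) • (e * k))
    (hkf : k * f = (v ^ (-3 : ℤ)) • (f * k))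
    (hserre_e : e ^ 2 * f - qint 2 • (e * f * e) + f * e ^ 2
      = -(qint 2) • (e * (v • k + v⁻¹ • k')))
    (hserre_f : f ^ 2 * e - qint 2 • (f * e * f) + e * f ^ 2
      = -(qint 2) • ((v • k + v⁻¹ • k') * f))
    (ep : ℕ → A) (hep : ∀ n, ep n = (qfact n)⁻¹ • e ^ n) :
    ∀ n : ℕ,
      f * ep (n + 1)
        = ep n * (f * e - v • (e * f)
            - qint n • ((v ^ (n : ℤ)) • k + (v ^ (-(n : ℤ))) • k'))
          + (v ^ (n + 1)) • (ep (n + 1) * f) := by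
  intro n
  have hqine : ∀ m : ℕ, qint (↑m + 1) ≠ 0 := by
    intro m
    have := qint_nat_ne (m+1) (by omega)
    push_cast at this
    exact this
  simp only [zpow_neg, zpow_natCast, ← inv_pow]
  exact aux_lemma (RatFunc ℚ) A v qint qfact e f k k' hkk' hk'k hke hserre_e
    v_ne q0 q1 qI1 qI2 qL3 qL4 hqine qfact_ne qfact_succ ep hep n
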